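/- For every integer m ≥ 1 and every real t ≥ 0, the series Σ_{n≥0} φ³_{n,m} t^n converges if and only if t ≤ 27/256. -/

import Mathlib

open Filter Topology

/-- The number of rooted type III triangulations of a disc with m+2 boundary
vertices and n internal vertices (for m ≥ 1). -/
noncomputable def phi3 (n m : ℕ) : ℝ :=
  (2 * Nat.factorial (2 * m + 1) * Nat.factorial (4 * n + 2 * m - 1) : ℝ) /
    (Nat.factorial (m - 1) * Nat.factorial (m + 1) * Nat.factorial n *
      Nat.factorial (3 * n + 2 * m + 1))

lemma phi3_pos (n m : ℕ) : 0 < phi3 n m := by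
  unfold phi3
  have h1 := Nat.factorial_pos (2 * m + 1)
  have h2 := Nat.factorial_pos (4 * n + 2 * m - 1)
  have h3 := Nat.factorial_pos (m - 1)
  have h4 := Nat.factorial_pos (m + 1)
  have h5 := Nat.factorial_pos n
  have h6 := Nat.factorial_pos (3 * n + 2 * m + 1)
  positivity

/-- The basic ratio identity for `phi3`. -/
lemma phi3_succ (m n : ℕ) (hm : 1 ≤ m) :
    phi3 (n + 1) m *
      (((n : ℝ) + 1) * (3 * n + 2 * m + 2) * (3 * n + 2 * m + 3) * (3 * n + 2 * m + 4)) =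
    phi3 n m *
      ((4 * n + 2 * m) * (4 * n + 2 * m + 1) * (4 * n + 2 * m + 2) * (4 * n + 2 * m + 3)) := by
  obtain ⟨j, rfl⟩ : ∃ j, m = j + 1 := ⟨m - 1, by omega⟩
  unfold phi3
  have e1 : 4 * (n + 1) + 2 * (j + 1) - 1 = 4 * n + 2 * j + 1 + 4 := by omega
  have e2 : 4 * n + 2 * (j + 1) - 1 = 4 * n + 2 * j + 1 := by omega
  have e3 : 3 * (n + 1) + 2 * (j + 1) + 1 = 3 * n + 2 * j + 3 + 3 := by omega
  have e4 : 3 * n + 2 * (j + 1) + 1 = 3 * n + 2 * j + 3 := by omega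
  rw [e1, e3, e2, e4]
  have F4 : ∀ x : ℕ, (Nat.factorial (x + 4) : ℝ) =
      ((x : ℝ) + 4) * ((x : ℝ) + 3) * ((x : ℝ) + 2) * ((x : ℝ) + 1) * Nat.factorial x := by
    intro x
    rw [show x + 4 = (x + 3) + 1 from rfl, Nat.factorial_succ,
      show x + 3 = (x + 2) + 1 from rfl, Nat.factorial_succ,
      show x + 2 = (x + 1) + 1 from rfl, Nat.factorial_succ, Nat.factorial_succ]
    push_cast
    ring
  have F3 : ∀ x : ℕ, (Nat.factorial (x + 3) : ℝ) =
      ((x : ℝ) + 3) * ((x : ℝ) + 2) * ((x : ℝ) + 1) * Nat.factorial x := by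
    intro x
    rw [show x + 3 = (x + 2) + 1 from rfl, Nat.factorial_succ,
      show x + 2 = (x + 1) + 1 from rfl, Nat.factorial_succ, Nat.factorial_succ]
    push_cast
    ring
  have hfac : ∀ x : ℕ, (Nat.factorial x : ℝ) ≠ 0 :=
    fun x => Nat.cast_ne_zero.mpr (Nat.factorial_ne_zero x)
  push_cast [F4, F3, Nat.factorial_succ]
  field_simp
  ring

/-- The key combinatorial inequality: for `n ≥ m²`, the ratio of consecutive
terms at `t = 27/256` is at most `(n+1)/(n+3)`. -/
lemma key_nat (m n : ℕ) (hm : 1 ≤ m) (hn : m ^ 2 ≤ n) :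
    27 * ((4 * n + 2 * m) * (4 * n + 2 * m + 1) * (4 * n + 2 * m + 2) * (4 * n + 2 * m + 3))
        * (n + 3) ≤
      256 * ((n + 1) * (3 * n + 2 * m + 2) * (3 * n + 2 * m + 3) * (3 * n + 2 * m + 4))
        * (n + 1) := by
  obtain ⟨j, rfl⟩ := Nat.exists_eq_add_of_le hm
  obtain ⟨k, rfl⟩ := Nat.exists_eq_add_of_le hn
  refine le_trans (Nat.le_add_right _
    (189504 + 651568*j + 1017704*j^2 + 923308*j^3 + 535028*j^4 + 211616*j^5 + 63392*j^6
      + 15296*j^7 + 2304*j^8 + 308400*k + 737620*k*j + 793468*k*j^2 + 480208*k*j^3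
      + 190112*k*j^4 + 54208*k*j^5 + 10368*k*j^6 + 179880*k^2 + 252880*k^2*j
      + 170160*k^2*j^2 + 62528*k^2*j^3 + 17280*k^2*j^4 + 43440*k^3 + 23616*k^3*j
      + 12672*k^3*j^2 + 3456*k^4)) (le_of_eq ?_)
  ring

/-- Summability at the boundary point `t = 27/256`. -/
lemma Z3_boundary (m : ℕ) (hm : 1 ≤ m) :
    Summable (fun n : ℕ => phi3 n m * (27 / 256 : ℝ) ^ n) := by
  set f : ℕ → ℝ := fun n => phi3 n m * (27 / 256 : ℝ) ^ n with hf
  have hfpos : ∀ n, 0 < f n := fun n => by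
    have := phi3_pos n m; positivity
  set n0 := m ^ 2 with hn0
  -- one-step inequality
  have key : ∀ n : ℕ, n0 ≤ n → f (n + 1) * ((n : ℝ) + 3) ≤ f n * ((n : ℝ) + 1) := by
    intro n hn
    have hD : (0:ℝ) < ((n : ℝ) + 1) * (3 * n + 2 * m + 2) * (3 * n + 2 * m + 3)
        * (3 * n + 2 * m + 4) := by positivity
    have hsucc := phi3_succ m n hm
    have hkey : (27 : ℝ) * ((4 * n + 2 * m) * (4 * n + 2 * m + 1) * (4 * n + 2 * m + 2)
          * (4 * n + 2 * m + 3)) * ((n : ℝ) + 3) ≤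
        256 * (((n : ℝ) + 1) * (3 * n + 2 * m + 2) * (3 * n + 2 * m + 3) * (3 * n + 2 * m + 4))
          * ((n : ℝ) + 1) := by
      have := key_nat m n hm hn
      exact_mod_cast this
    rw [← mul_le_mul_iff_of_pos_right hD]
    have hp := (phi3_pos n m).le
    have hq : (0:ℝ) ≤ (27 / 256 : ℝ) ^ n := by positivity
    calc f (n + 1) * ((n : ℝ) + 3) * (((n : ℝ) + 1) * (3 * n + 2 * m + 2) * (3 * n + 2 * m + 3)
          * (3 * n + 2 * m + 4))
        = phi3 n m * (27 / 256 : ℝ) ^ n * ((27 / 256) * ((4 * n + 2 * m) * (4 * n + 2 * m + 1)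
            * (4 * n + 2 * m + 2) * (4 * n + 2 * m + 3)) * ((n : ℝ) + 3)) := by
          simp only [hf, pow_succ]
          linear_combination ((27/256:ℝ)^n * (27/256) * ((n : ℝ) + 3)) * hsucc
      _ ≤ phi3 n m * (27 / 256 : ℝ) ^ n * (((n : ℝ) + 1) * (((n : ℝ) + 1) * (3 * n + 2 * m + 2)
            * (3 * n + 2 * m + 3) * (3 * n + 2 * m + 4))) := by
          refine mul_le_mul_of_nonneg_left ?_ (by positivity)
          nlinarith [hkey]
      _ = f n * ((n : ℝ) + 1) * (((n : ℝ) + 1) * (3 * n + 2 * m + 2) * (3 * n + 2 * m + 3)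
            * (3 * n + 2 * m + 4)) := by simp only [hf]; ring
  -- the weighted sequence is antitone from n0 on
  set C : ℝ := f n0 * ((n0 : ℝ) + 1) * ((n0 : ℝ) + 2) with hC
  have anti : ∀ k : ℕ, f (n0 + k) * (((n0 : ℝ) + k) + 1) * (((n0 : ℝ) + k) + 2) ≤ C := by
    intro k
    induction k with
    | zero => simp [hC]
    | succ k ih =>
      have hk := key (n0 + k) (Nat.le_add_right _ _)
      have h2 : (0:ℝ) ≤ ((n0 : ℝ) + k) + 2 := by positivity
      have hmul := mul_le_mul_of_nonneg_right hk h2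
      refine le_trans ?_ ih
      have hfe : f (n0 + (k + 1)) = f (n0 + k + 1) := rfl
      rw [hfe]
      push_cast at hmul ⊢
      nlinarith [hmul]
  -- hence a quadratic-decay bound
  have hbound : ∀ k : ℕ, f (k + n0) ≤ C * (1 / ((k : ℝ) + 1) ^ 2) := by
    intro k
    have h1 : (0:ℝ) < ((k : ℝ) + 1) ^ 2 := by positivity
    rw [mul_one_div, le_div_iff₀ h1]
    have hk := anti k
    have hle : ((k : ℝ) + 1) ^ 2 ≤ (((n0 : ℝ) + k) + 1) * (((n0 : ℝ) + k) + 2) := by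
      have : (0:ℝ) ≤ (n0 : ℝ) := by positivity
      nlinarith
    have := (hfpos (n0 + k)).le
    rw [Nat.add_comm]
    nlinarith
  -- conclude summability
  have hsum2 : Summable (fun k : ℕ => C * (1 / ((k : ℝ) + 1) ^ 2)) := by
    have h := (summable_nat_add_iff 1).mpr (Real.summable_one_div_nat_pow.mpr one_lt_two)
    have h' : Summable (fun k : ℕ => 1 / ((k : ℝ) + 1) ^ 2) := by
      refine h.congr fun k => ?_
      push_cast
      ring
    exact h'.mul_left C
  have htail : Summable (fun k : ℕ => f (k + n0)) :=
    Summable.of_nonneg_of_le (fun k => (hfpos _).le) hbound hsum2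
  exact (summable_nat_add_iff n0).mp htail

set_option maxHeartbeats 1600000 in
/-- for m ≥ 1 and t ≥ 0, the series Σ_n φ³_{n,m} t^n converges
iff t ≤ 27/256. -/
theorem Z3_radius (m : ℕ) (hm : 1 ≤ m) (t : ℝ) (ht : 0 ≤ t) :
    Summable (fun n : ℕ => phi3 n m * t ^ n) ↔ t ≤ 27 / 256 := by
  constructor
  · intro hs
    by_contra hgt
    push_neg at hgt
    have ht0 : 0 < t := lt_trans (by norm_num) hgt
    -- ratio tends to (256/27) * t > 1
    set g : ℝ → ℝ := fun u =>
      ((4 + 2 * m * u) * (4 + (2 * m + 1) * u) * (4 + (2 * m + 2) * u) * (4 + (2 * m + 3) * u)) /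
      ((1 + u) * (3 + (2 * m + 2) * u) * (3 + (2 * m + 3) * u) * (3 + (2 * m + 4) * u)) with hgdef
    have hgc : ContinuousAt g 0 := by
      apply ContinuousAt.div
      · fun_prop
      · fun_prop
      · norm_num
    have hg0 : g 0 = 256 / 27 := by simp only [hgdef]; norm_num
    have htend0 : Tendsto (fun n : ℕ => g (1 / (n : ℝ))) atTop (𝓝 (256 / 27)) := by
      rw [← hg0]
      exact hgc.tendsto.comp tendsto_one_div_atTop_nhds_zero_nat
    have heq : ∀ᶠ n : ℕ in atTop,
        g (1 / (n : ℝ)) * t = ‖phi3 (n + 1) m * t ^ (n + 1)‖ / ‖phi3 n m * t ^ n‖ := by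
      filter_upwards [eventually_ge_atTop 1] with n hn
      have hnpos : (0:ℝ) < (n:ℝ) := by exact_mod_cast hn
      have hfn : (0:ℝ) < phi3 n m * t ^ n := by have := phi3_pos n m; positivity
      have hfn1 : (0:ℝ) < phi3 (n + 1) m * t ^ (n + 1) := by
        have := phi3_pos (n + 1) m; positivity
      have hD : (0:ℝ) < ((n : ℝ) + 1) * (3 * n + 2 * m + 2) * (3 * n + 2 * m + 3)
          * (3 * n + 2 * m + 4) := by positivity
      have hgden : (0:ℝ) < (1 + 1/(n:ℝ)) * (3 + (2 * m + 2) * (1/(n:ℝ)))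
          * (3 + (2 * m + 3) * (1/(n:ℝ))) * (3 + (2 * m + 4) * (1/(n:ℝ))) := by positivity
      have hne : (n:ℝ) ≠ 0 := hnpos.ne'
      have hstep : ‖phi3 (n + 1) m * t ^ (n + 1)‖ / ‖phi3 n m * t ^ n‖ =
          (phi3 (n + 1) m / phi3 n m) * t := by
        rw [Real.norm_of_nonneg hfn.le, Real.norm_of_nonneg hfn1.le, pow_succ]
        rw [div_eq_iff hfn.ne']
        field_simp [(phi3_pos n m).ne']
      rw [hstep]
      have hA : phi3 (n + 1) m / phi3 n m =
          ((4 * n + 2 * m) * (4 * n + 2 * m + 1) * (4 * n + 2 * m + 2) * (4 * n + 2 * m + 3) : ℝ) /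
          (((n : ℝ) + 1) * (3 * n + 2 * m + 2) * (3 * n + 2 * m + 3) * (3 * n + 2 * m + 4)) := by
        rw [div_eq_div_iff (phi3_pos n m).ne' hD.ne']
        linear_combination phi3_succ m n hm
      rw [hA]
      simp only [hgdef]
      congr 1
      rw [div_eq_div_iff hgden.ne' hD.ne']
      field_simp
      ring
    have htend : Tendsto (fun n : ℕ => ‖phi3 (n + 1) m * t ^ (n + 1)‖ / ‖phi3 n m * t ^ n‖)
        atTop (𝓝 (256 / 27 * t)) :=
      Tendsto.congr' heq (htend0.mul_const t)
    have hgt1 : 1 < 256 / 27 * t := by nlinarith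
    exact not_summable_of_ratio_test_tendsto_gt_one hgt1 htend hs
  · intro hle
    refine Summable.of_nonneg_of_le (fun n => ?_) (fun n => ?_) (Z3_boundary m hm)
    · have := phi3_pos n m; positivity
    · exact mul_le_mul_of_nonneg_left (pow_le_pow_left₀ ht hle n) (phi3_pos n m).le
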